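/- Let u : Z_+^2 \ {0} → R_+ be a function that is eventually decreasing in both arguments, let α₁, α₂ > 0, let b₁ : (0,∞) → (0,∞) be strictly increasing and regularly varying with index 1/α₁, let b₂ be strictly increasing and regularly varying with index 1/α₂, and let h : (0,∞) → (0,∞) be regularly varying with index ρ < 0. Suppose lim_{n→∞, n ∈ N} u(⌊b₁(n) x⌋, ⌊b₂(n) y⌋)/h(n) = λ(x,y) > 0 for all x,y > 0. Then the limit function λ satisfies the scaling property λ(s^{1/α₁} x, s^{1/α₂} y) = s^ρ λ(x,y) for all s, x, y > 0. -/

import Mathlib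

open Filter Topology

/-- non-standard case scaling property of the limit function:
`λ(s^{1/α₁} x, s^{1/α₂} y) = s^ρ λ(x, y)` for all `s, x, y > 0`. -/
theorem stmt_2
    (u : ℕ → ℕ → ℝ) (hu_nonneg : ∀ i j, 0 ≤ u i j)
    (hu_dec : ∃ N : ℕ, ∀ i i' j j' : ℕ, N ≤ i → N ≤ j → i ≤ i' → j ≤ j' →
      u i' j' ≤ u i j)
    (α₁ α₂ : ℝ) (hα₁ : 0 < α₁) (hα₂ : 0 < α₂)
    (b₁ b₂ : ℝ → ℝ)
    (hb₁pos : ∀ t : ℝ, 0 < t → 0 < b₁ t) (hb₂pos : ∀ t : ℝ, 0 < t → 0 < b₂ t)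
    (hb₁mono : StrictMonoOn b₁ (Set.Ioi (0 : ℝ)))
    (hb₂mono : StrictMonoOn b₂ (Set.Ioi (0 : ℝ)))
    (hb₁RV : ∀ x : ℝ, 0 < x →
      Tendsto (fun t : ℝ => b₁ (t * x) / b₁ t) atTop (𝓝 (x ^ (1 / α₁))))
    (hb₂RV : ∀ x : ℝ, 0 < x →
      Tendsto (fun t : ℝ => b₂ (t * x) / b₂ t) atTop (𝓝 (x ^ (1 / α₂))))
    (h : ℝ → ℝ) (hpos : ∀ t : ℝ, 0 < t → 0 < h t)
    (ρ : ℝ) (hρ : ρ < 0)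
    (hRV : ∀ x : ℝ, 0 < x →
      Tendsto (fun t : ℝ => h (t * x) / h t) atTop (𝓝 (x ^ ρ)))
    (lam : ℝ → ℝ → ℝ) (hlam : ∀ x y : ℝ, 0 < x → 0 < y → 0 < lam x y)
    (hlim : ∀ x y : ℝ, 0 < x → 0 < y →
      Tendsto (fun n : ℕ => u ⌊b₁ n * x⌋₊ ⌊b₂ n * y⌋₊ / h n) atTop
        (𝓝 (lam x y))) :
    ∀ s x y : ℝ, 0 < s → 0 < x → 0 < y →
      lam (s ^ (1 / α₁) * x) (s ^ (1 / α₂) * y) = s ^ ρ * lam x y := by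
  obtain ⟨N, hN⟩ := hu_dec
  -- b₁ and b₂ tend to infinity
  have hbtop : ∀ (b : ℝ → ℝ) (α : ℝ), 0 < α → (∀ t, 0 < t → 0 < b t) →
      StrictMonoOn b (Set.Ioi (0 : ℝ)) →
      (∀ x : ℝ, 0 < x → Tendsto (fun t : ℝ => b (t * x) / b t) atTop (𝓝 (x ^ (1 / α)))) →
      Tendsto b atTop atTop := by
    intro b α hα hbpos hbmono hbRV
    set f : ℝ → ℝ := fun t => b (max t 1) with hf
    have hfmono : Monotone f := by
      intro a c hac
      exact hbmono.monotoneOn (Set.mem_Ioi.2 (by positivity))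
        (Set.mem_Ioi.2 (by positivity)) (max_le_max hac le_rfl)
    have hfeq : ∀ᶠ t in (atTop : Filter ℝ), f t = b t := by
      filter_upwards [eventually_ge_atTop (1 : ℝ)] with t ht
      simp [hf, max_eq_left ht]
    by_cases hbdd : BddAbove (Set.range f)
    · exfalso
      have hL : Tendsto f atTop (𝓝 (⨆ t, f t)) := tendsto_atTop_ciSup hfmono hbdd
      set L : ℝ := ⨆ t, f t with hLdef
      have hLpos : 0 < L := lt_of_lt_of_le (hbpos 1 one_pos)
        (by simpa [hf] using le_ciSup hbdd (1 : ℝ))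
      have h2 : Tendsto (fun t : ℝ => f (t * 2)) atTop (𝓝 L) :=
        hL.comp (Tendsto.atTop_mul_const two_pos tendsto_id)
      have hdiv : Tendsto (fun t : ℝ => f (t * 2) / f t) atTop (𝓝 (L / L)) :=
        h2.div hL hLpos.ne'
      have heq : ∀ᶠ t in (atTop : Filter ℝ), f (t * 2) / f t = b (t * 2) / b t := by
        filter_upwards [eventually_ge_atTop (1 : ℝ)] with t ht
        have h1 : max t 1 = t := max_eq_left ht
        have h2' : max (t * 2) 1 = t * 2 := max_eq_left (by nlinarith)
        simp [hf, h1, h2']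
      have huniq : L / L = (2 : ℝ) ^ (1 / α) :=
        tendsto_nhds_unique (hdiv.congr' heq) (hbRV 2 two_pos)
      have hone : (1 : ℝ) < (2 : ℝ) ^ (1 / α) :=
        (Real.one_lt_rpow_iff_of_pos two_pos).2 (Or.inl ⟨one_lt_two, by positivity⟩)
      rw [div_self hLpos.ne'] at huniq
      linarith
    · have hub : ∀ M : ℝ, ∃ a, M ≤ f a := by
        intro M
        rcases not_bddAbove_iff.1 hbdd M with ⟨z, ⟨a, ha⟩, hz⟩
        exact ⟨a, by rw [ha]; exact hz.le⟩
      exact (tendsto_atTop_atTop_of_monotone hfmono hub).congr' hfeq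
  have hb1top := hbtop b₁ α₁ hα₁ hb₁pos hb₁mono hb₁RV
  have hb2top := hbtop b₂ α₂ hα₂ hb₂pos hb₂mono hb₂RV
  -- natural multiplication maps
  have hmulmono : ∀ q : ℕ, 0 < q → StrictMono (fun k : ℕ => q * k) := by
    intro q hq a c hac
    exact mul_lt_mul_of_pos_left hac hq
  have hfloor : ∀ (b : ℝ → ℝ), Tendsto b atTop atTop → ∀ c : ℝ, 0 < c → ∀ q : ℕ, 0 < q →
      Tendsto (fun k : ℕ => ⌊b (↑(q * k)) * c⌋₊) atTop atTop := by
    intro b hb c hc q hq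
    exact tendsto_nat_floor_atTop.comp
      ((Tendsto.atTop_mul_const hc
        (hb.comp (tendsto_natCast_atTop_atTop.comp ((hmulmono q hq).tendsto_atTop)))))
  -- the key comparison inequality
  have key : ∀ p q : ℕ, 0 < p → 0 < q → ∀ X Y X' Y' : ℝ, 0 < X → 0 < Y → 0 < X' → 0 < Y' →
      X < ((p : ℝ) / q) ^ (1 / α₁) * X' → Y < ((p : ℝ) / q) ^ (1 / α₂) * Y' →
      ((p : ℝ) / q) ^ ρ * lam X' Y' ≤ lam X Y := by
    intro p q hp hq X Y X' Y' hX hY hX' hY' hcond1 hcond2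
    set r : ℝ := (p : ℝ) / q with hrdef
    have hqR : (0 : ℝ) < q := Nat.cast_pos.2 hq
    have hpR : (0 : ℝ) < p := Nat.cast_pos.2 hp
    have hr : 0 < r := div_pos hpR hqR
    have hqk : Tendsto (fun k : ℕ => q * k) atTop atTop := (hmulmono q hq).tendsto_atTop
    have hpk : Tendsto (fun k : ℕ => p * k) atTop atTop := (hmulmono p hp).tendsto_atTop
    have hqkR : Tendsto (fun k : ℕ => ((q * k : ℕ) : ℝ)) atTop atTop :=
      tendsto_natCast_atTop_atTop.comp hqk
    have hcast : ∀ k : ℕ, ((q * k : ℕ) : ℝ) * r = ((p * k : ℕ) : ℝ) := by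
      intro k
      rw [hrdef]
      push_cast
      field_simp
    have hA : Tendsto (fun k : ℕ =>
        u ⌊b₁ ↑(q * k) * X⌋₊ ⌊b₂ ↑(q * k) * Y⌋₊ / h ↑(q * k)) atTop (𝓝 (lam X Y)) :=
      (hlim X Y hX hY).comp hqk
    have hB : Tendsto (fun k : ℕ =>
        u ⌊b₁ ↑(p * k) * X'⌋₊ ⌊b₂ ↑(p * k) * Y'⌋₊ / h ↑(p * k)) atTop (𝓝 (lam X' Y')) :=
      (hlim X' Y' hX' hY').comp hpk
    have hC : Tendsto (fun k : ℕ => h ↑(p * k) / h ↑(q * k)) atTop (𝓝 (r ^ ρ)) := by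
      have := (hRV r hr).comp hqkR
      exact this.congr fun k => by
        simp only [Function.comp_apply]
        rw [hcast k]
    have hD1 : Tendsto (fun k : ℕ => b₁ ↑(p * k) / b₁ ↑(q * k)) atTop (𝓝 (r ^ (1 / α₁))) := by
      have := (hb₁RV r hr).comp hqkR
      exact this.congr fun k => by
        simp only [Function.comp_apply]
        rw [hcast k]
    have hD2 : Tendsto (fun k : ℕ => b₂ ↑(p * k) / b₂ ↑(q * k)) atTop (𝓝 (r ^ (1 / α₂))) := by
      have := (hb₂RV r hr).comp hqkR
      exact this.congr fun k => by
        simp only [Function.comp_apply]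
        rw [hcast k]
    -- eventual comparisons of the floors
    have hev1 : ∀ᶠ k : ℕ in atTop, b₁ ↑(q * k) * X ≤ b₁ ↑(p * k) * X' := by
      have hlt : X / X' < r ^ (1 / α₁) := (div_lt_iff₀ hX').2 hcond1
      filter_upwards [hD1.eventually (eventually_gt_nhds hlt), eventually_gt_atTop 0]
        with k hk hk0
      have hbq : 0 < b₁ ↑(q * k) := hb₁pos _ (Nat.cast_pos.2 (Nat.mul_pos hq hk0))
      have := (div_lt_div_iff₀ hX' hbq).1 hk
      nlinarith
    have hev2 : ∀ᶠ k : ℕ in atTop, b₂ ↑(q * k) * Y ≤ b₂ ↑(p * k) * Y' := by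
      have hlt : Y / Y' < r ^ (1 / α₂) := (div_lt_iff₀ hY').2 hcond2
      filter_upwards [hD2.eventually (eventually_gt_nhds hlt), eventually_gt_atTop 0]
        with k hk hk0
      have hbq : 0 < b₂ ↑(q * k) := hb₂pos _ (Nat.cast_pos.2 (Nat.mul_pos hq hk0))
      have := (div_lt_div_iff₀ hY' hbq).1 hk
      nlinarith
    have hevN1 : ∀ᶠ k : ℕ in atTop, N ≤ ⌊b₁ ↑(q * k) * X⌋₊ :=
      (hfloor b₁ hb1top X hX q hq).eventually_ge_atTop N
    have hevN2 : ∀ᶠ k : ℕ in atTop, N ≤ ⌊b₂ ↑(q * k) * Y⌋₊ :=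
      (hfloor b₂ hb2top Y hY q hq).eventually_ge_atTop N
    have hevu : ∀ᶠ k : ℕ in atTop,
        u ⌊b₁ ↑(p * k) * X'⌋₊ ⌊b₂ ↑(p * k) * Y'⌋₊ / h ↑(p * k) * (h ↑(p * k) / h ↑(q * k))
          ≤ u ⌊b₁ ↑(q * k) * X⌋₊ ⌊b₂ ↑(q * k) * Y⌋₊ / h ↑(q * k) := by
      filter_upwards [hev1, hev2, hevN1, hevN2, eventually_gt_atTop 0]
        with k h1 h2 h3 h4 hk0
      have hhp : 0 < h ↑(p * k) := hpos _ (Nat.cast_pos.2 (Nat.mul_pos hp hk0))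
      have hhq : 0 < h ↑(q * k) := hpos _ (Nat.cast_pos.2 (Nat.mul_pos hq hk0))
      have hue : u ⌊b₁ ↑(p * k) * X'⌋₊ ⌊b₂ ↑(p * k) * Y'⌋₊
          ≤ u ⌊b₁ ↑(q * k) * X⌋₊ ⌊b₂ ↑(q * k) * Y⌋₊ :=
        hN _ _ _ _ h3 h4 (Nat.floor_le_floor h1) (Nat.floor_le_floor h2)
      have heq : u ⌊b₁ ↑(p * k) * X'⌋₊ ⌊b₂ ↑(p * k) * Y'⌋₊ / h ↑(p * k)
          * (h ↑(p * k) / h ↑(q * k))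
          = u ⌊b₁ ↑(p * k) * X'⌋₊ ⌊b₂ ↑(p * k) * Y'⌋₊ / h ↑(q * k) := by
        rw [div_mul_div_comm, mul_comm (u ⌊b₁ ↑(p * k) * X'⌋₊ ⌊b₂ ↑(p * k) * Y'⌋₊) (h ↑(p * k)),
          mul_div_mul_left _ _ hhp.ne']
      rw [heq]
      gcongr
    have hBC : Tendsto (fun k : ℕ =>
        u ⌊b₁ ↑(p * k) * X'⌋₊ ⌊b₂ ↑(p * k) * Y'⌋₊ / h ↑(p * k) * (h ↑(p * k) / h ↑(q * k)))
        atTop (𝓝 (r ^ ρ * lam X' Y')) := by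
      have := hB.mul hC
      rwa [mul_comm] at this
    exact le_of_tendsto_of_tendsto hBC hA hevu
  -- every positive rational is a ratio of positive naturals
  have hratQ : ∀ rq : ℚ, 0 < rq → ∃ p q : ℕ, 0 < p ∧ 0 < q ∧ (rq : ℝ) = (p : ℝ) / q := by
    intro rq hrq
    have hnum : 0 < rq.num := Rat.num_pos.2 hrq
    refine ⟨rq.num.toNat, rq.den, by omega, rq.pos, ?_⟩
    rw [Rat.cast_def]
    congr 1
    exact_mod_cast (Int.toNat_of_nonneg hnum.le).symm
  -- upper bound from rationals above s
  have upper : ∀ s x y : ℝ, 0 < s → 0 < x → 0 < y → ∀ rq : ℚ, s < (rq : ℝ) →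
      ((rq : ℝ)) ^ ρ * lam x y ≤ lam (s ^ (1 / α₁) * x) (s ^ (1 / α₂) * y) := by
    intro s x y hs hx hy rq hsr
    have hrqpos : 0 < rq := by exact_mod_cast (hs.trans hsr : (0 : ℝ) < (rq : ℝ))
    obtain ⟨p, q, hp, hq, hpq⟩ := hratQ rq hrqpos
    have h1 : s ^ (1 / α₁) * x < ((p : ℝ) / q) ^ (1 / α₁) * x := by
      rw [← hpq]
      exact mul_lt_mul_of_pos_right (Real.rpow_lt_rpow hs.le hsr (by positivity)) hx
    have h2 : s ^ (1 / α₂) * y < ((p : ℝ) / q) ^ (1 / α₂) * y := by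
      rw [← hpq]
      exact mul_lt_mul_of_pos_right (Real.rpow_lt_rpow hs.le hsr (by positivity)) hy
    have := key p q hp hq _ _ x y (by positivity) (by positivity) hx hy h1 h2
    rwa [← hpq] at this
  -- lower bound from rationals below s
  have lower : ∀ s x y : ℝ, 0 < s → 0 < x → 0 < y → ∀ rq : ℚ, 0 < rq → (rq : ℝ) < s →
      lam (s ^ (1 / α₁) * x) (s ^ (1 / α₂) * y) ≤ ((rq : ℝ)) ^ ρ * lam x y := by
    intro s x y hs hx hy rq hrqpos hrs
    obtain ⟨p, q, hp, hq, hpq⟩ := hratQ rq⁻¹ (inv_pos.2 hrqpos)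
    have hrR : (0 : ℝ) < (rq : ℝ) := by exact_mod_cast hrqpos
    have hpq' : ((p : ℝ) / q) = ((rq : ℝ))⁻¹ := by rw [← hpq]; push_cast; ring
    have hinv : (1 : ℝ) < ((rq : ℝ))⁻¹ * s := by
      rw [inv_mul_eq_div]
      exact (one_lt_div hrR).2 hrs
    have hfac1 : (1 : ℝ) < ((p : ℝ) / q) ^ (1 / α₁) * s ^ (1 / α₁) := by
      rw [hpq', ← Real.mul_rpow (by positivity) hs.le]
      exact (Real.one_lt_rpow_iff_of_pos (by positivity)).2 (Or.inl ⟨hinv, by positivity⟩)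
    have hfac2 : (1 : ℝ) < ((p : ℝ) / q) ^ (1 / α₂) * s ^ (1 / α₂) := by
      rw [hpq', ← Real.mul_rpow (by positivity) hs.le]
      exact (Real.one_lt_rpow_iff_of_pos (by positivity)).2 (Or.inl ⟨hinv, by positivity⟩)
    have hcond1 : x < ((p : ℝ) / q) ^ (1 / α₁) * (s ^ (1 / α₁) * x) := by
      calc x = 1 * x := (one_mul x).symm
        _ < ((p : ℝ) / q) ^ (1 / α₁) * s ^ (1 / α₁) * x := mul_lt_mul_of_pos_right hfac1 hx
        _ = ((p : ℝ) / q) ^ (1 / α₁) * (s ^ (1 / α₁) * x) := by ring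
    have hcond2 : y < ((p : ℝ) / q) ^ (1 / α₂) * (s ^ (1 / α₂) * y) := by
      calc y = 1 * y := (one_mul y).symm
        _ < ((p : ℝ) / q) ^ (1 / α₂) * s ^ (1 / α₂) * y := mul_lt_mul_of_pos_right hfac2 hy
        _ = ((p : ℝ) / q) ^ (1 / α₂) * (s ^ (1 / α₂) * y) := by ring
    have hkey := key p q hp hq x y (s ^ (1 / α₁) * x) (s ^ (1 / α₂) * y)
      hx hy (by positivity) (by positivity) hcond1 hcond2
    rw [hpq', Real.inv_rpow hrR.le] at hkey
    have hrρ : 0 < (rq : ℝ) ^ ρ := Real.rpow_pos_of_pos hrR ρ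
    have hmul := mul_le_mul_of_nonneg_left hkey hrρ.le
    rw [← mul_assoc, mul_inv_cancel₀ hrρ.ne', one_mul] at hmul
    exact hmul
  -- squeeze
  intro s x y hs hx hy
  have hcont : ContinuousAt (fun t : ℝ => t ^ ρ) s :=
    Real.continuousAt_rpow_const s ρ (Or.inl hs.ne')
  have hL1 : s ^ ρ * lam x y ≤ lam (s ^ (1 / α₁) * x) (s ^ (1 / α₂) * y) := by
    have hex : ∀ n : ℕ, ∃ rq : ℚ, s < (rq : ℝ) ∧ (rq : ℝ) < s + 1 / ((n : ℝ) + 1) := by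
      intro n
      have : (0 : ℝ) < 1 / ((n : ℝ) + 1) := by positivity
      exact exists_rat_btwn (by linarith)
    choose rs h1 h2 using hex
    have hub : Tendsto (fun n : ℕ => s + 1 / ((n : ℝ) + 1)) atTop (𝓝 s) := by
      simpa using (tendsto_const_nhds (x := s)).add tendsto_one_div_add_atTop_nhds_zero_nat
    have hrs : Tendsto (fun n : ℕ => ((rs n : ℚ) : ℝ)) atTop (𝓝 s) :=
      tendsto_of_tendsto_of_tendsto_of_le_of_le tendsto_const_nhds hub
        (fun n => (h1 n).le) (fun n => (h2 n).le)
    have hlim2 : Tendsto (fun n : ℕ => ((rs n : ℚ) : ℝ) ^ ρ * lam x y) atTop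
        (𝓝 (s ^ ρ * lam x y)) := (hcont.tendsto.comp hrs).mul_const _
    exact le_of_tendsto hlim2
      (Eventually.of_forall fun n => upper s x y hs hx hy (rs n) (h1 n))
  have hL2 : lam (s ^ (1 / α₁) * x) (s ^ (1 / α₂) * y) ≤ s ^ ρ * lam x y := by
    have hex : ∀ n : ℕ, ∃ rq : ℚ,
        max (s - 1 / ((n : ℝ) + 1)) (s / 2) < (rq : ℝ) ∧ (rq : ℝ) < s := by
      intro n
      have : (0 : ℝ) < 1 / ((n : ℝ) + 1) := by positivity
      exact exists_rat_btwn (max_lt (by linarith) (by linarith))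
    choose rs h1 h2 using hex
    have hlb : Tendsto (fun n : ℕ => s - 1 / ((n : ℝ) + 1)) atTop (𝓝 s) := by
      simpa using (tendsto_const_nhds (x := s)).sub tendsto_one_div_add_atTop_nhds_zero_nat
    have hrs : Tendsto (fun n : ℕ => ((rs n : ℚ) : ℝ)) atTop (𝓝 s) :=
      tendsto_of_tendsto_of_tendsto_of_le_of_le hlb tendsto_const_nhds
        (fun n => ((le_max_left _ _).trans_lt (h1 n)).le) (fun n => (h2 n).le)
    have hpos' : ∀ n : ℕ, 0 < rs n := by
      intro n
      have : (0 : ℝ) < (rs n : ℝ) := lt_of_lt_of_le (by linarith) ((le_max_right _ _).trans (h1 n).le)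
      exact_mod_cast this
    have hlim2 : Tendsto (fun n : ℕ => ((rs n : ℚ) : ℝ) ^ ρ * lam x y) atTop
        (𝓝 (s ^ ρ * lam x y)) := (hcont.tendsto.comp hrs).mul_const _
    exact ge_of_tendsto hlim2
      (Eventually.of_forall fun n => lower s x y hs hx hy (rs n) (hpos' n) (h2 n))
  linarith
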